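/- Let μ be a Borel probability measure on ℝ with right-continuous distribution function M, f ∈ L^p(0,1) for p ∈ [1,∞), F(m) = ∫₀^m f(ω)dω, and let g be as in the generalized chain rule (g = f∘M off atoms, g = difference quotient of F∘M at atoms). Then for all x ∈ ℝ, F(M(x)) = ∫_{(-∞,x]} g dμ; that is, the distributional derivative of F ∘ M equals the measure g·μ. -/

import Mathlib

open MeasureTheory Set Filter Function ProbabilityTheory
open scoped ENNReal Topology

noncomputable def quantQ (μ : Measure ℝ) : ℝ → ℝ := fun ω => sInf {y | ω ≤ cdf μ y}

section Aux
variable (μ : Measure ℝ) [IsProbabilityMeasure μ]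

lemma quantS_nonempty {ω : ℝ} (hω : ω < 1) : {y | ω ≤ cdf μ y}.Nonempty := by
  obtain ⟨y, hy⟩ := ((tendsto_cdf_atTop μ).eventually (eventually_gt_nhds hω)).exists
  exact ⟨y, hy.le⟩

lemma quantS_bddBelow {ω : ℝ} (hω : 0 < ω) : BddBelow {y | ω ≤ cdf μ y} := by
  obtain ⟨z, hz⟩ := ((tendsto_cdf_atBot μ).eventually (eventually_lt_nhds hω)).exists
  refine ⟨z, fun y hy => ?_⟩
  by_contra h
  push_neg at h
  exact absurd (le_trans hy (monotone_cdf μ h.le)) (not_le.2 hz)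

lemma quantQ_le_iff {ω x : ℝ} (hω : ω ∈ Ioo (0:ℝ) 1) : quantQ μ ω ≤ x ↔ ω ≤ cdf μ x := by
  constructor
  · intro h
    rw [← (cdf μ).iInf_Ioi_eq x]
    refine le_ciInf fun ⟨r, hr⟩ => ?_
    obtain ⟨z, hz, hzr⟩ := exists_lt_of_csInf_lt (quantS_nonempty μ hω.2) (lt_of_le_of_lt h hr)
    exact le_trans hz (monotone_cdf μ hzr.le)
  · intro h
    exact csInf_le (quantS_bddBelow μ hω.1) h

lemma le_cdf_quantQ {ω : ℝ} (hω : ω ∈ Ioo (0:ℝ) 1) : ω ≤ cdf μ (quantQ μ ω) :=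
  (quantQ_le_iff μ hω).1 le_rfl

lemma leftLim_cdf_quantQ_le {ω : ℝ} (hω : ω ∈ Ioo (0:ℝ) 1) :
    leftLim (cdf μ) (quantQ μ ω) ≤ ω := by
  by_contra h
  push_neg at h
  have htd : Tendsto (cdf μ) (𝓝[<] (quantQ μ ω)) (𝓝 (leftLim (cdf μ) (quantQ μ ω))) :=
    (monotone_cdf μ).tendsto_leftLim _
  have hev : ∀ᶠ y in 𝓝[<] (quantQ μ ω), ω < cdf μ y ∧ y ∈ Iio (quantQ μ ω) :=
    (htd.eventually (eventually_gt_nhds h)).and self_mem_nhdsWithin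
  obtain ⟨y, hy, hylt⟩ := hev.exists
  exact absurd (csInf_le (quantS_bddBelow μ hω.1) hy.le) (not_le.2 hylt)

lemma quantQ_monotoneOn : MonotoneOn (quantQ μ) (Ioo (0:ℝ) 1) := by
  intro a ha b hb hab
  exact le_csInf (quantS_nonempty μ hb.2) fun y hy =>
    csInf_le (quantS_bddBelow μ ha.1) (le_trans hab hy)

lemma quantQ_aemeasurable : AEMeasurable (quantQ μ) (volume.restrict (Ioo (0:ℝ) 1)) :=
  aemeasurable_restrict_of_monotoneOn measurableSet_Ioo (quantQ_monotoneOn μ)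

lemma cdf_nonneg' (y : ℝ) : 0 ≤ cdf μ y := cdf_nonneg μ y

lemma leftLim_cdf_nonneg (y : ℝ) : 0 ≤ leftLim (cdf μ) y :=
  le_trans (cdf_nonneg μ (y - 1)) ((monotone_cdf μ).le_leftLim (by linarith))

lemma leftLim_cdf_le (y : ℝ) : leftLim (cdf μ) y ≤ cdf μ y := (monotone_cdf μ).leftLim_le le_rfl

lemma meas_singleton_eq (y : ℝ) :
    μ {y} = ENNReal.ofReal (cdf μ y - leftLim (cdf μ) y) := by
  conv_lhs => rw [← measure_cdf μ]
  exact (cdf μ).measure_singleton y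

lemma meas_Iio_eq (y : ℝ) : μ (Iio y) = ENNReal.ofReal (leftLim (cdf μ) y) := by
  have h1 : μ (Iic y) = μ (Iio y) + μ {y} := by
    rw [← measure_union (by simp) (measurableSet_singleton y)]
    congr 1
    ext z
    simp only [mem_union, mem_Iio, mem_singleton_iff, mem_Iic]
    constructor
    · intro h; exact h.lt_or_eq
    · rintro (h | h) <;> simp [h.le, h]
  rw [meas_singleton_eq] at h1
  rw [← ofReal_cdf μ y] at h1
  have h2 : ENNReal.ofReal (leftLim (cdf μ) y) + ENNReal.ofReal (cdf μ y - leftLim (cdf μ) y)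
      = ENNReal.ofReal (cdf μ y) := by
    rw [← ENNReal.ofReal_add (leftLim_cdf_nonneg μ y) (by linarith [leftLim_cdf_le μ y])]
    ring_nf
  have hfin : μ (Iio y) ≠ ∞ := measure_ne_top μ _
  rw [← h2] at h1
  exact (ENNReal.add_left_inj (by simp)).1 h1.symm

lemma meas_singleton_toReal (y : ℝ) :
    (μ {y}).toReal = cdf μ y - leftLim (cdf μ) y := by
  rw [meas_singleton_eq, ENNReal.toReal_ofReal (by linarith [leftLim_cdf_le μ y])]

lemma cdf_quantQ_of_nonatom {ω : ℝ} (hω : ω ∈ Ioo (0:ℝ) 1) (h : μ {quantQ μ ω} = 0) :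
    cdf μ (quantQ μ ω) = ω := by
  have h1 := meas_singleton_eq μ (quantQ μ ω)
  rw [h] at h1
  have h2 : cdf μ (quantQ μ ω) - leftLim (cdf μ) (quantQ μ ω) ≤ 0 := by
    by_contra hc
    push_neg at hc
    exact absurd h1.symm (ne_of_gt (ENNReal.ofReal_pos.2 hc))
  exact le_antisymm (by linarith [leftLim_cdf_quantQ_le μ hω]) (le_cdf_quantQ μ hω)

lemma volume_Ioo_inter_Iic {r : ℝ} (h0 : 0 ≤ r) (h1 : r ≤ 1) :
    volume (Ioo (0:ℝ) 1 ∩ Iic r) = ENNReal.ofReal r := by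
  have hsub : Ioo (0:ℝ) 1 ∩ Iic r ⊆ Ioc 0 r := fun ω hω => ⟨hω.1.1, hω.2⟩
  have hsub2 : Ioc (0:ℝ) r ⊆ (Ioo (0:ℝ) 1 ∩ Iic r) ∪ {r} := by
    intro ω hω
    rcases lt_or_eq_of_le (lt_of_le_of_lt (le_trans hω.2 h1) (by norm_num : (1:ℝ) < 2)).le with _ | _
    · rcases lt_or_eq_of_le (le_trans hω.2 h1) with h | h
      · exact Or.inl ⟨⟨hω.1, h⟩, hω.2⟩
      · rcases lt_or_eq_of_le hω.2 with h' | h'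
        · exact Or.inl ⟨⟨hω.1, lt_of_lt_of_le h' h1⟩, hω.2⟩
        · exact Or.inr h'
    · rcases lt_or_eq_of_le hω.2 with h' | h'
      · exact Or.inl ⟨⟨hω.1, lt_of_lt_of_le h' h1⟩, hω.2⟩
      · exact Or.inr h'
  refine le_antisymm ?_ ?_
  · calc volume (Ioo (0:ℝ) 1 ∩ Iic r) ≤ volume (Ioc (0:ℝ) r) := measure_mono hsub
      _ = ENNReal.ofReal r := by simp
  · calc ENNReal.ofReal r = volume (Ioc (0:ℝ) r) := by simp
      _ ≤ volume ((Ioo (0:ℝ) 1 ∩ Iic r) ∪ {r}) := measure_mono hsub2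
      _ ≤ volume (Ioo (0:ℝ) 1 ∩ Iic r) + volume {r} := measure_union_le _ _
      _ = volume (Ioo (0:ℝ) 1 ∩ Iic r) := by simp

lemma quantQ_map_eq : (volume.restrict (Ioo (0:ℝ) 1)).map (quantQ μ) = μ := by
  have hQ := quantQ_aemeasurable μ
  have hmap : ∀ x : ℝ, ((volume.restrict (Ioo (0:ℝ) 1)).map (quantQ μ)) (Iic x)
      = ENNReal.ofReal (cdf μ x) := by
    intro x
    rw [Measure.map_apply_of_aemeasurable hQ measurableSet_Iic,
      Measure.restrict_apply' measurableSet_Ioo]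
    have hset : quantQ μ ⁻¹' Iic x ∩ Ioo (0:ℝ) 1 = Ioo (0:ℝ) 1 ∩ Iic (cdf μ x) := by
      ext ω
      simp only [mem_inter_iff, mem_preimage, mem_Iic, mem_Ioo]
      constructor
      · rintro ⟨h1, h2⟩; exact ⟨h2, (quantQ_le_iff μ h2).1 h1⟩
      · rintro ⟨h1, h2⟩; exact ⟨(quantQ_le_iff μ h1).2 h2, h1⟩
    rw [hset, volume_Ioo_inter_Iic (cdf_nonneg μ x) (cdf_le_one μ x)]
  haveI : IsProbabilityMeasure ((volume.restrict (Ioo (0:ℝ) 1)).map (quantQ μ)) := by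
    constructor
    rw [Measure.map_apply_of_aemeasurable hQ MeasurableSet.univ]
    simp [Real.volume_Ioo]
  refine Measure.ext_of_Iic _ _ fun x => ?_
  rw [hmap x, ofReal_cdf μ x]

/-- If `ω` lies in the jump interval of `a`, then `quantQ μ ω = a`. -/
lemma quantQ_eq_of_mem_interval {ω a : ℝ} (hω : ω ∈ Ioo (0:ℝ) 1)
    (h : ω ∈ Ioc (leftLim (cdf μ) a) (cdf μ a)) : quantQ μ ω = a := by
  have h1 : quantQ μ ω ≤ a := (quantQ_le_iff μ hω).2 h.2
  refine le_antisymm h1 ?_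
  by_contra hc
  push_neg at hc
  have h3 := le_trans (le_cdf_quantQ μ hω) ((monotone_cdf μ).le_leftLim hc)
  exact absurd (lt_of_lt_of_le h.1 h3) (lt_irrefl _)

lemma countable_atoms : {y : ℝ | μ {y} ≠ 0}.Countable := by
  refine ((cdf μ).countable_leftLim_ne).mono fun y hy => ?_
  simp only [mem_setOf_eq] at hy ⊢
  intro hc
  apply hy
  have h1 := meas_singleton_eq μ y
  rw [h1, hc]
  simp

/-- Null pushforward for nonatomic part. -/
lemma null_nonatomic_pull {E : Set ℝ} (hE : MeasurableSet E) (hE0 : volume E = 0) :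
    μ {y | μ {y} = 0 ∧ cdf μ y ∈ Ioo (0:ℝ) 1 ∧ cdf μ y ∈ E} = 0 := by
  set B := {y : ℝ | μ {y} = 0 ∧ cdf μ y ∈ Ioo (0:ℝ) 1 ∧ cdf μ y ∈ E} with hB
  have hBm : MeasurableSet B := by
    have h1 : MeasurableSet {y : ℝ | μ {y} = 0} := by
      have : {y : ℝ | μ {y} = 0} = {y : ℝ | μ {y} ≠ 0}ᶜ := by ext y; simp
      rw [this]
      exact ((countable_atoms μ).measurableSet).compl
    have hc : Measurable (cdf μ) := (monotone_cdf μ).measurable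
    exact h1.inter ((hc measurableSet_Ioo).inter (hc hE))
  have h2 : μ B = volume (quantQ μ ⁻¹' B ∩ Ioo (0:ℝ) 1) := by
    conv_lhs => rw [← quantQ_map_eq μ]
    rw [Measure.map_apply_of_aemeasurable (quantQ_aemeasurable μ) hBm,
      Measure.restrict_apply' measurableSet_Ioo]
  rw [h2]
  refine le_antisymm (le_trans (measure_mono ?_) (le_of_eq hE0)) (zero_le)
  rintro ω ⟨hQ, hω⟩
  obtain ⟨hna, _, hmem⟩ := hQ
  rwa [cdf_quantQ_of_nonatom μ hω hna] at hmem

lemma null_cdf_zero : μ {y | cdf μ y = 0} = 0 := by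
  set s := {y : ℝ | cdf μ y = 0} with hs
  rcases eq_empty_or_nonempty s with h | h
  · simp [h]
  have hbdd : BddAbove s := by
    obtain ⟨y₀, hy₀⟩ := ((tendsto_cdf_atTop μ).eventually
      (eventually_gt_nhds (by norm_num : (1:ℝ)/2 < 1))).exists
    refine ⟨y₀, fun y hy => ?_⟩
    by_contra hc
    push_neg at hc
    have := monotone_cdf μ hc.le
    rw [hy] at this
    linarith
  set b := sSup s with hb
  by_cases hcb : cdf μ b = 0
  · have : s ⊆ Iic b := fun y hy => le_csSup hbdd hy
    refine le_antisymm (le_trans (measure_mono this) ?_) (zero_le)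
    rw [← ofReal_cdf μ b, hcb]
    simp
  · have hsub : s ⊆ Iio b := by
      intro y hy
      rcases lt_or_eq_of_le (le_csSup hbdd hy) with h' | h'
      · exact h'
      · exact absurd (by rw [hb, ← h']; exact hy) hcb
    have hL : leftLim (cdf μ) b = 0 := by
      have hne : (Iio b).Nonempty := by
        obtain ⟨z, hz⟩ := h
        exact ⟨z, hsub hz⟩
      have hnb : 𝓝[<] b ≠ ⊥ := by
        obtain ⟨z, hz⟩ := hne
        exact (nhdsWithin_Iio_self_neBot' ⟨z, hz⟩).ne
      haveI : (𝓝[<] b).NeBot := ⟨hnb⟩; rw [(monotone_cdf μ).leftLim_eq_sSup]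
      have himg : cdf μ '' Iio b = {0} := by
        apply Subset.antisymm
        · rintro _ ⟨y, hy, rfl⟩
          have : ∃ z ∈ s, y < z := exists_lt_of_lt_csSup h hy
          obtain ⟨z, hzs, hyz⟩ := this
          have := monotone_cdf μ hyz.le
          rw [hzs] at this
          simp [le_antisymm this (cdf_nonneg μ y)]
        · rintro _ rfl
          obtain ⟨z, hz⟩ := h
          exact ⟨z, hsub hz, hz⟩
      rw [himg]
      simp
    refine le_antisymm (le_trans (measure_mono hsub) ?_) (zero_le)
    rw [meas_Iio_eq μ b, hL]
    simp

lemma null_cdf_one : μ {y | μ {y} = 0 ∧ cdf μ y = 1} = 0 := by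
  set s := {y : ℝ | μ {y} = 0 ∧ cdf μ y = 1} with hs
  rcases eq_empty_or_nonempty s with h | h
  · simp [h]
  have hone : {y : ℝ | cdf μ y = 1}.Nonempty := h.mono fun y hy => hy.2
  have hbdd : BddBelow {y : ℝ | cdf μ y = 1} := by
    obtain ⟨y₀, hy₀⟩ := ((tendsto_cdf_atBot μ).eventually
      (eventually_lt_nhds (by norm_num : (0:ℝ) < 1/2))).exists
    refine ⟨y₀, fun y hy => ?_⟩
    by_contra hc
    push_neg at hc
    have := monotone_cdf μ hc.le
    rw [hy] at this
    linarith
  set b := sInf {y : ℝ | cdf μ y = 1} with hb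
  have hcb : cdf μ b = 1 := by
    refine le_antisymm (cdf_le_one μ b) ?_
    rw [← (cdf μ).iInf_Ioi_eq b]
    refine le_ciInf fun ⟨r, hr⟩ => ?_
    obtain ⟨z, hz, hzr⟩ := exists_lt_of_csInf_lt hone (lt_of_le_of_lt le_rfl hr)
    have := monotone_cdf μ hzr.le
    rw [hz] at this
    exact this
  have hIoi : μ (Ioi b) = 0 := by
    have : μ (Iic b) = 1 := by rw [← ofReal_cdf μ b, hcb]; simp
    have hc := measure_compl (measurableSet_Iic (a := b)) (measure_ne_top μ _)
    rw [compl_Iic] at hc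
    rw [hc, this]
    simp
  have hsub : s ⊆ (s ∩ {b}) ∪ Ioi b := by
    intro y hy
    have hyb : b ≤ y := csInf_le hbdd hy.2
    rcases lt_or_eq_of_le hyb with h' | h'
    · exact Or.inr h'
    · exact Or.inl ⟨hy, by simp [← h']⟩
  refine le_antisymm (le_trans (measure_mono hsub) ?_) (zero_le)
  refine le_trans (measure_union_le _ _) ?_
  rw [hIoi]
  have : μ (s ∩ {b}) = 0 := by
    by_cases hbs : b ∈ s
    · exact le_antisymm (le_trans (measure_mono inter_subset_right)
        (le_of_eq (by simpa using hbs.1))) (zero_le)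
    · have : s ∩ {b} = ∅ := by
        ext z; simp only [mem_inter_iff, mem_singleton_iff, mem_empty_iff_false, iff_false]
        rintro ⟨hz, rfl⟩; exact hbs hz
      simp [this]
  simp [this]

end Aux

/-- Generalized BV chain rule: the distributional derivative of `F ∘ M` is the measure `g·μ`,
i.e. `F(M(x)) = ∫_{(-∞,x]} g dμ` for all `x`. -/
theorem stmt_3 (μ : Measure ℝ) [IsProbabilityMeasure μ]
    (p : ℝ≥0∞) (hp : 1 ≤ p) (hp' : p ≠ ⊤)
    (f F M Mleft g : ℝ → ℝ)
    (hf : MemLp f p (volume.restrict (Ioo (0:ℝ) 1)))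
    (hF : ∀ m, F m = ∫ ω in Ioo (0:ℝ) m, f ω)
    (hM : ∀ x, M x = (μ (Iic x)).toReal)
    (hMleft : ∀ x, Mleft x = (μ (Iio x)).toReal)
    (hg : ∀ x, g x = if μ {x} = 0 then f (M x)
      else (F (M x) - F (Mleft x)) / (μ {x}).toReal) :
    ∀ x : ℝ, F (M x) = ∫ y in Iic x, g y ∂μ := by
  classical
  haveI : IsFiniteMeasure (volume.restrict (Ioo (0:ℝ) 1)) :=
    ⟨by rw [Measure.restrict_apply_univ]; simp⟩
  set c : ℝ → ℝ := fun y => cdf μ y with hc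
  set L : ℝ → ℝ := fun y => leftLim (cdf μ) y with hL
  have hMc : ∀ y, M y = c y := fun y => by rw [hM]; exact (cdf_eq_real μ y).symm
  have hMLc : ∀ y, Mleft y = L y := fun y => by
    rw [hMleft, meas_Iio_eq, ENNReal.toReal_ofReal (leftLim_cdf_nonneg μ y)]
  have hfint : Integrable f (volume.restrict (Ioo (0:ℝ) 1)) := hf.integrable hp
  set A : Set ℝ := {y | μ {y} ≠ 0} with hA
  have hAc : A.Countable := countable_atoms μ
  haveI : Countable ↥A := hAc.to_subtype
  -- measurable version of f
  set f' : ℝ → ℝ := (hf.1).mk f with hf'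
  have hf'm : StronglyMeasurable f' := hf.1.stronglyMeasurable_mk
  have hff' : f =ᵐ[volume.restrict (Ioo (0:ℝ) 1)] f' := hf.1.ae_eq_mk
  set E : Set ℝ := toMeasurable volume ({m | f m ≠ f' m} ∩ Ioo 0 1) with hE
  have hEm : MeasurableSet E := measurableSet_toMeasurable _ _
  have hE0 : volume E = 0 := by
    rw [hE, measure_toMeasurable]
    have := (ae_iff.1 hff')
    rwa [Measure.restrict_apply' measurableSet_Ioo] at this
  have hEsub : {m | f m ≠ f' m} ∩ Ioo 0 1 ⊆ E := subset_toMeasurable _ _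
  -- measurable version of g
  set g' : ℝ → ℝ := fun y => if μ {y} = 0 then f' (c y) else g y with hg'
  have hcm : Measurable c := (monotone_cdf μ).measurable
  have hg'm : Measurable g' := by
    intro t ht
    have hset : g' ⁻¹' t = (A ∩ g' ⁻¹' t) ∪ (Aᶜ ∩ (fun y => f' (c y)) ⁻¹' t) := by
      ext y
      by_cases hy : μ {y} = 0
      · simp [hg', hy, hA, mem_preimage]
      · simp [hg', hy, hA, mem_preimage]
    rw [hset]
    exact ((hAc.mono inter_subset_left).measurableSet).union
      ((hAc.measurableSet.compl).inter ((hf'm.measurable.comp hcm) ht))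
  have hgg' : g =ᵐ[μ] g' := by
    rw [Filter.EventuallyEq, ae_iff]
    have hsub : {y | ¬ g y = g' y} ⊆
        ({y | μ {y} = 0 ∧ c y ∈ Ioo (0:ℝ) 1 ∧ c y ∈ E} ∪ {y | cdf μ y = 0})
          ∪ {y | μ {y} = 0 ∧ cdf μ y = 1} := by
      intro y hy
      simp only [mem_setOf_eq] at hy
      by_cases hya : μ {y} = 0
      · have hgy : g y = f (c y) := by rw [hg, if_pos hya, hMc]
        have hg'y : g' y = f' (c y) := if_pos hya
        have hne : f (c y) ≠ f' (c y) := by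
          intro hcontra; exact hy (by rw [hgy, hg'y, hcontra])
        have h0 : 0 ≤ c y := cdf_nonneg μ y
        have h1 : c y ≤ 1 := cdf_le_one μ y
        rcases eq_or_lt_of_le h0 with h0' | h0'
        · exact Or.inl (Or.inr h0'.symm)
        rcases eq_or_lt_of_le h1 with h1' | h1'
        · exact Or.inr ⟨hya, h1'⟩
        · exact Or.inl (Or.inl ⟨hya, ⟨h0', h1'⟩, hEsub ⟨hne, h0', h1'⟩⟩)
      · exact absurd (show g y = g' y from (if_neg hya).symm) hy
    refine le_antisymm (le_trans (measure_mono hsub) ?_) (zero_le)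
    refine le_trans (measure_union_le _ _) ?_
    rw [null_cdf_one μ]
    refine le_trans (add_le_add (measure_union_le _ _) le_rfl) ?_
    rw [null_nonatomic_pull μ hEm hE0, null_cdf_zero μ]
    simp
  have hgsm : AEStronglyMeasurable g μ := ⟨g', hg'm.stronglyMeasurable, hgg'⟩
  -- integrability of f on subintervals of [0,1]
  have hfI01 : IntegrableOn f (Ioc (0:ℝ) 1) volume :=
    IntegrableOn.congr_set_ae (hfint : IntegrableOn f (Ioo (0:ℝ) 1) volume)
      (Ioo_ae_eq_Ioc (a := (0:ℝ)) (b := (1:ℝ))).symm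
  have hfIoc : ∀ u w : ℝ, 0 ≤ u → w ≤ 1 → IntegrableOn f (Ioc u w) volume := by
    intro u w hu hw
    rcases le_or_gt w u with h | h
    · rw [Ioc_eq_empty (not_lt.2 h)]; simp [IntegrableOn]
    · exact hfI01.mono_set (Ioc_subset_Ioc hu hw)
  have hFIoc : ∀ m : ℝ, 0 ≤ m → F m = ∫ ω in Ioc (0:ℝ) m, f ω := by
    intro m hm
    rw [hF m]
    exact setIntegral_congr_set (Ioo_ae_eq_Ioc)
  have hFdiff : ∀ u w : ℝ, 0 ≤ u → u ≤ w → w ≤ 1 →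
      F w - F u = ∫ ω in Ioc u w, f ω := by
    intro u w hu huw hw1
    rw [hFIoc u hu, hFIoc w (le_trans hu huw)]
    have hun : Ioc (0:ℝ) u ∪ Ioc u w = Ioc 0 w := Ioc_union_Ioc_eq_Ioc hu huw
    rw [← hun, setIntegral_union (Set.Ioc_disjoint_Ioc_of_le le_rfl) measurableSet_Ioc
      (hfIoc 0 u le_rfl (le_trans huw hw1)) (hfIoc u w hu hw1)]
    ring
  intro x
  set t : ℝ := c x with htdef
  have ht0 : 0 ≤ t := cdf_nonneg μ x
  have ht1 : t ≤ 1 := cdf_le_one μ x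
  -- pieces
  set piece : ↥A → Set ℝ := fun a => Ioc (L a) (c a) ∩ Ioo 0 1 with hpiece
  have hLa0 : ∀ a : ℝ, 0 ≤ L a := fun a => leftLim_cdf_nonneg μ a
  have hca1 : ∀ a : ℝ, c a ≤ 1 := fun a => cdf_le_one μ a
  have hLac : ∀ a : ℝ, L a ≤ c a := fun a => leftLim_cdf_le μ a
  have hpm : ∀ a : ↥A, MeasurableSet (piece a) :=
    fun a => measurableSet_Ioc.inter measurableSet_Ioo
  have hIdisj : Pairwise (Disjoint on (fun a : ↥A => Ioc (L a) (c a))) := by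
    intro a b hab
    have hlt : ∀ u v : ℝ, u < v → Disjoint (Ioc (L u) (c u)) (Ioc (L v) (c v)) := by
      intro u v huv
      rw [Set.disjoint_left]
      rintro ω ⟨_, h2⟩ ⟨h3, _⟩
      exact absurd (lt_of_le_of_lt (le_trans h2 ((monotone_cdf μ).le_leftLim huv)) h3)
        (lt_irrefl ω)
    rcases lt_or_gt_of_ne (Subtype.coe_injective.ne hab) with h | h
    · exact hlt _ _ h
    · exact (hlt _ _ h).symm
  have hpdisj : Pairwise (Disjoint on piece) := fun a b hab =>
    ((hIdisj hab).mono inter_subset_left inter_subset_left)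
  set W : Set ℝ := ⋃ a : ↥A, piece a with hW
  have hWm : MeasurableSet W := MeasurableSet.iUnion hpm
  set V : Set ℝ := Ioo 0 1 \ W with hV
  have hVm : MeasurableSet V := measurableSet_Ioo.diff hWm
  have hWsub : W ⊆ Ioo 0 1 := iUnion_subset fun a => inter_subset_right
  have hVW : V ∪ W = Ioo 0 1 := diff_union_of_subset hWsub
  have hdVW : Disjoint V W := disjoint_sdiff_left
  set φ : ℝ → ℝ := fun ω => (Iic x).indicator g (quantQ μ ω) with hφ
  set ψ : ℝ → ℝ := fun ω => (Ioc (0:ℝ) t).indicator f ω with hψ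
  -- φ is a.e. strongly measurable on (0,1)
  have hφsm : AEStronglyMeasurable φ (volume.restrict (Ioo (0:ℝ) 1)) := by
    have h1 : AEStronglyMeasurable ((Iic x).indicator g)
        ((volume.restrict (Ioo (0:ℝ) 1)).map (quantQ μ)) := by
      rw [quantQ_map_eq μ]
      exact hgsm.indicator measurableSet_Iic
    exact h1.comp_aemeasurable (quantQ_aemeasurable μ)
  -- on each piece, φ is constant
  have hQp : ∀ a : ↥A, ∀ ω ∈ piece a, quantQ μ ω = (a : ℝ) := by
    rintro a ω ⟨h1, h2⟩
    exact quantQ_eq_of_mem_interval μ h2 h1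
  have hφp : ∀ a : ↥A, ∀ ω ∈ piece a, φ ω = if (a : ℝ) ≤ x then g a else 0 := by
    intro a ω hω
    rw [hφ]
    simp only [indicator_apply, mem_Iic, hQp a ω hω]
  -- value of g at an atom
  have hga : ∀ a : ↥A, g a = (F (c a) - F (L a)) / (c a - L a) := by
    intro a
    rw [hg, if_neg a.2, hMc, hMLc, meas_singleton_toReal]
  have hatomgap : ∀ a : ↥A, 0 < c (a:ℝ) - L (a:ℝ) := by
    intro a
    have hne : μ {(a:ℝ)} ≠ 0 := a.2
    rw [meas_singleton_eq μ] at hne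
    have h2 : ¬ (c (a:ℝ) - L (a:ℝ) ≤ 0) := fun hcon => hne (by
      rw [ENNReal.ofReal_eq_zero]; exact hcon)
    linarith [not_le.1 h2]
  -- volume of pieces
  have hvolp : ∀ a : ↥A, volume (piece a) = ENNReal.ofReal (c a - L a) := by
    intro a
    refine le_antisymm (le_trans (measure_mono inter_subset_left) (le_of_eq ?_)) ?_
    · rw [Real.volume_Ioc]
    · have hsub2 : Ioc (L (a:ℝ)) (c (a:ℝ)) ⊆ piece a ∪ {1} := by
        rintro ω ⟨h1, h2⟩
        rcases lt_or_eq_of_le (le_trans h2 (hca1 a)) with h | h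
        · exact Or.inl ⟨⟨h1, h2⟩, lt_of_le_of_lt (hLa0 a) h1, h⟩
        · exact Or.inr h
      calc ENNReal.ofReal (c (a:ℝ) - L (a:ℝ)) = volume (Ioc (L (a:ℝ)) (c (a:ℝ))) := by
            rw [Real.volume_Ioc]
        _ ≤ volume (piece a ∪ {1}) := measure_mono hsub2
        _ ≤ volume (piece a) + volume {1} := measure_union_le _ _
        _ = volume (piece a) := by simp
  have hpae : ∀ a : ↥A, piece a =ᵐ[volume] Ioc (L (a:ℝ)) (c (a:ℝ)) := by
    intro a
    rw [ae_eq_set]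
    constructor
    · rw [diff_eq_empty.2 inter_subset_left]; simp
    · have hsub : Ioc (L (a:ℝ)) (c (a:ℝ)) \ piece a ⊆ ({1} : Set ℝ) := by
        intro ω hω
        rcases lt_or_eq_of_le (le_trans hω.1.2 (hca1 a)) with h | h
        · exact absurd ⟨hω.1, lt_of_le_of_lt (hLa0 a) hω.1.1, h⟩ hω.2
        · exact (mem_singleton_iff).2 h
      refine le_antisymm (le_trans (measure_mono hsub) (le_of_eq Real.volume_singleton))
        (zero_le)
  -- the lintegral bound on pieces
  have hppsum : volume.restrict W = Measure.sum (fun a : ↥A => volume.restrict (piece a)) := by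
    rw [hW, Measure.restrict_iUnion hpdisj hpm]
  -- lintegral of φ over each piece
  have hlin : ∀ a : ↥A, ∫⁻ ω in piece a, (‖φ ω‖₊ : ℝ≥0∞) ∂volume
      = (‖(if (a:ℝ) ≤ x then g a else 0 : ℝ)‖₊ : ℝ≥0∞) * volume (piece a) := by
    intro a
    calc ∫⁻ ω in piece a, (‖φ ω‖₊ : ℝ≥0∞) ∂volume
        = ∫⁻ ω in piece a, (‖(if (a:ℝ) ≤ x then g a else 0 : ℝ)‖₊ : ℝ≥0∞) ∂volume := by
          have hcong : ∀ᵐ ω ∂(volume.restrict (piece a)),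
              (‖φ ω‖₊ : ℝ≥0∞) = (‖(if (a:ℝ) ≤ x then g a else 0 : ℝ)‖₊ : ℝ≥0∞) :=
            (ae_restrict_iff' (hpm a)).2 (ae_of_all _ fun ω hω => by rw [hφp a ω hω])
          exact lintegral_congr_ae hcong
      _ = _ := setLIntegral_const _ _
  have hbound : ∀ a : ↥A, (‖(if (a:ℝ) ≤ x then g a else 0 : ℝ)‖₊ : ℝ≥0∞) * volume (piece a)
      ≤ ∫⁻ ω in Ioc (L (a:ℝ)) (c (a:ℝ)), (‖f ω‖₊ : ℝ≥0∞) ∂volume := by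
    intro a
    by_cases hax : (a:ℝ) ≤ x
    · rw [if_pos hax, hvolp a]
      have hkey : (‖g (a:ℝ)‖₊ : ℝ≥0∞) * ENNReal.ofReal (c (a:ℝ) - L (a:ℝ))
          = (‖F (c (a:ℝ)) - F (L (a:ℝ))‖₊ : ℝ≥0∞) := by
        have e : ∀ z : ℝ, (‖z‖₊ : ℝ≥0∞) = ENNReal.ofReal ‖z‖ := fun z => (ofReal_norm z).symm
        rw [hga a, e, e,
          ← ENNReal.ofReal_mul (norm_nonneg _)]
        congr 1
        rw [Real.norm_eq_abs, Real.norm_eq_abs, abs_div, abs_of_pos (hatomgap a)]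
        field_simp
        exact mul_div_cancel_right₀ _ (ne_of_gt (hatomgap a))
      rw [hkey, hFdiff _ _ (hLa0 a) (hLac a) (hca1 a)]
      exact enorm_integral_le_lintegral_enorm _
    · rw [if_neg hax]; simp
  have hWfin : ∫⁻ ω in W, (‖φ ω‖₊ : ℝ≥0∞) ∂volume < ∞ := by
    rw [hppsum, lintegral_sum_measure]
    calc ∑' a : ↥A, ∫⁻ ω in piece a, (‖φ ω‖₊ : ℝ≥0∞) ∂volume
        ≤ ∑' a : ↥A, ∫⁻ ω in Ioc (L (a:ℝ)) (c (a:ℝ)), (‖f ω‖₊ : ℝ≥0∞) ∂volume :=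
          ENNReal.tsum_le_tsum fun a => le_trans (le_of_eq (hlin a)) (hbound a)
      _ = ∫⁻ ω in ⋃ a : ↥A, Ioc (L (a:ℝ)) (c (a:ℝ)), (‖f ω‖₊ : ℝ≥0∞) ∂volume :=
          (lintegral_iUnion (fun a => measurableSet_Ioc) hIdisj _).symm
      _ ≤ ∫⁻ ω in Ioc (0:ℝ) 1, (‖f ω‖₊ : ℝ≥0∞) ∂volume :=
          lintegral_mono_set (iUnion_subset fun a => Ioc_subset_Ioc (hLa0 a) (hca1 a))
      _ = ∫⁻ ω in Ioo (0:ℝ) 1, (‖f ω‖₊ : ℝ≥0∞) ∂volume := by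
          rw [Measure.restrict_congr_set Ioo_ae_eq_Ioc.symm]
      _ < ∞ := hfint.2
  have hWint : IntegrableOn φ W volume :=
    ⟨hφsm.mono_measure (Measure.restrict_mono hWsub le_rfl), hWfin⟩
  have hψint : IntegrableOn ψ (Ioo (0:ℝ) 1) volume := hfint.indicator measurableSet_Ioc
  have hψWint : IntegrableOn ψ W volume := hψint.mono_set hWsub
  -- per-piece Bochner equality
  have hpieceint : ∀ a : ↥A, ∫ ω in piece a, φ ω = ∫ ω in piece a, ψ ω := by
    intro a
    by_cases hax : (a:ℝ) ≤ x
    · have hφc : ∀ ω ∈ piece a, φ ω = g a := fun ω hω => by rw [hφp a ω hω, if_pos hax]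
      have hψc : ∀ ω ∈ piece a, ψ ω = f ω := by
        intro ω hω
        have h1 : ω ∈ Ioc (0:ℝ) t := ⟨hω.2.1, le_trans hω.1.2 ((monotone_cdf μ) hax)⟩
        exact indicator_of_mem h1 f
      rw [setIntegral_congr_fun (hpm a) hφc, setIntegral_congr_fun (hpm a) hψc,
        setIntegral_const, setIntegral_congr_set (hpae a),
        ← hFdiff _ _ (hLa0 a) (hLac a) (hca1 a), measureReal_def, hvolp a,
        ENNReal.toReal_ofReal (by linarith [hatomgap a]), hga a, smul_eq_mul]
      field_simp
      rw [mul_comm]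
      exact mul_div_cancel_right₀ _ (ne_of_gt (hatomgap a))
    · have hφc : ∀ ω ∈ piece a, φ ω = 0 := fun ω hω => by rw [hφp a ω hω, if_neg hax]
      have hψc : ∀ ω ∈ piece a, ψ ω = 0 := by
        intro ω hω
        have hxa : x < (a:ℝ) := not_le.1 hax
        have h1 : t ≤ L (a:ℝ) := (monotone_cdf μ).le_leftLim hxa
        have hnm : ω ∉ Ioc (0:ℝ) t := fun hmem => absurd (le_trans hmem.2 h1) (not_le.2 hω.1.1)
        exact indicator_of_notMem hnm f
      rw [setIntegral_congr_fun (hpm a) hφc, setIntegral_congr_fun (hpm a) hψc]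
  have hWeq : ∫ ω in W, φ ω = ∫ ω in W, ψ ω := by
    rw [show W = ⋃ a : ↥A, piece a from rfl,
      integral_iUnion hpm hpdisj hWint, integral_iUnion hpm hpdisj hψWint]
    exact tsum_congr hpieceint
  -- V part
  have haeV : ∀ᵐ ω ∂volume, ω ∈ V → φ ω = ψ ω := by
    have h1 : volume (L '' A) = 0 := ((hAc.image L).measure_zero _)
    filter_upwards [measure_eq_zero_iff_ae_notMem.1 h1] with ω hωL hωV
    have hωIoo : ω ∈ Ioo (0:ℝ) 1 := hωV.1
    have hna : μ {quantQ μ ω} = 0 := by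
      by_contra hcon
      have haA : quantQ μ ω ∈ A := hcon
      rcases lt_or_eq_of_le (leftLim_cdf_quantQ_le μ hωIoo) with h | h
      · have hmem : ω ∈ piece ⟨quantQ μ ω, haA⟩ := ⟨⟨h, le_cdf_quantQ μ hωIoo⟩, hωIoo⟩
        exact hωV.2 (mem_iUnion.2 ⟨⟨quantQ μ ω, haA⟩, hmem⟩)
      · exact hωL ⟨quantQ μ ω, haA, h⟩
    have hcQ : c (quantQ μ ω) = ω := cdf_quantQ_of_nonatom μ hωIoo hna
    by_cases hωt : ω ≤ t
    · have hQx : quantQ μ ω ≤ x := (quantQ_le_iff μ hωIoo).2 hωt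
      show (Iic x).indicator g (quantQ μ ω) = (Ioc (0:ℝ) t).indicator f ω
      rw [indicator_of_mem (show quantQ μ ω ∈ Iic x from hQx) g,
        Set.indicator_of_mem (show ω ∈ Ioc (0:ℝ) t from ⟨hωIoo.1, hωt⟩) f,
        hg (quantQ μ ω), if_pos hna, hMc (quantQ μ ω), hcQ]
    · have hQx : quantQ μ ω ∉ Iic x := fun hcon => hωt ((quantQ_le_iff μ hωIoo).1 hcon)
      show (Iic x).indicator g (quantQ μ ω) = (Ioc (0:ℝ) t).indicator f ω
      rw [indicator_of_notMem (show quantQ μ ω ∉ Iic x from hQx) g,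
        Set.indicator_of_notMem (show ω ∉ Ioc (0:ℝ) t from fun hmem => hωt hmem.2) f]
  have hVψint : IntegrableOn ψ V volume := hψint.mono_set diff_subset
  have hVφint : IntegrableOn φ V volume :=
    hVψint.congr ((ae_restrict_iff' hVm).2 (haeV.mono fun ω h hV => (h hV).symm))
  have hVeq : ∫ ω in V, φ ω = ∫ ω in V, ψ ω := setIntegral_congr_ae hVm haeV
  -- assembly
  have hmain : ∫ ω in Ioo (0:ℝ) 1, φ ω = ∫ ω in Ioo (0:ℝ) 1, ψ ω := by
    rw [← hVW, setIntegral_union hdVW hWm hVφint hWint,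
      setIntegral_union hdVW hWm hVψint hψWint, hVeq, hWeq]
  have hRHS : ∫ y in Iic x, g y ∂μ = ∫ ω in Ioo (0:ℝ) 1, φ ω := by
    rw [← integral_indicator measurableSet_Iic]
    conv_lhs => rw [← quantQ_map_eq μ]
    rw [integral_map (quantQ_aemeasurable μ)
      (by rw [quantQ_map_eq μ]; exact hgsm.indicator measurableSet_Iic)]
  have hψeval : ∫ ω in Ioo (0:ℝ) 1, ψ ω = F t := by
    have hind : ∫ ω in Ioo (0:ℝ) 1, ψ ω = ∫ ω in Ioo (0:ℝ) 1 ∩ Ioc 0 t, f ω :=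
      setIntegral_indicator measurableSet_Ioc
    rw [hind]
    have hseq : (Ioo (0:ℝ) 1 ∩ Ioc 0 t : Set ℝ) =ᵐ[volume] (Ioc (0:ℝ) t : Set ℝ) := by
      rw [ae_eq_set]
      constructor
      · have h1 : (Ioo (0:ℝ) 1 ∩ Ioc 0 t) \ Ioc 0 t = ∅ := diff_eq_empty.2 inter_subset_right
        rw [h1]; simp
      · have hsub : Ioc (0:ℝ) t \ (Ioo 0 1 ∩ Ioc 0 t) ⊆ ({1} : Set ℝ) := by
          rintro ω ⟨⟨h1, h2⟩, h3⟩
          have hni : ω ∉ Ioo (0:ℝ) 1 := fun hcon => h3 ⟨hcon, h1, h2⟩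
          rcases lt_or_eq_of_le (le_trans h2 ht1) with h | h
          · exact absurd ⟨h1, h⟩ hni
          · exact h
        exact le_antisymm (le_trans (measure_mono hsub) (le_of_eq Real.volume_singleton))
          (zero_le)
    rw [setIntegral_congr_set hseq, ← hFIoc t ht0]
  rw [hRHS, hmain, hψeval, hMc x]
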